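/- Let R be a right-reduced TRS and let s be an R-reducible term that is minimal with respect to proper encompassment among reducible terms. If s →_R^+ t then s → t is a variant (up to renaming) of a rule in R. -/

import Mathlib

namespace KB

-- Generic ARS notions
def NF {α : Type _} (r : α → α → Prop) (a : α) : Prop := ∀ b, ¬ r a b

def SymmCl {α : Type _} (r : α → α → Prop) (a b : α) : Prop := r a b ∨ r b a

def Conv {α : Type _} (r : α → α → Prop) : α → α → Prop :=
  Relation.ReflTransGen (SymmCl r)

def Joinable {α : Type _} (r : α → α → Prop) (a b : α) : Prop :=
  ∃ c, Relation.ReflTransGen r a c ∧ Relation.ReflTransGen r b c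

def Confluent {α : Type _} (r : α → α → Prop) : Prop :=
  ∀ a b c, Relation.ReflTransGen r a b → Relation.ReflTransGen r a c → Joinable r b c

def Terminating {α : Type _} (r : α → α → Prop) : Prop :=
  WellFounded (fun a b => r b a)

def Complete {α : Type _} (r : α → α → Prop) : Prop := Terminating r ∧ Confluent r

def NormTo {α : Type _} (r : α → α → Prop) (a b : α) : Prop :=
  Relation.ReflTransGen r a b ∧ NF r b

-- First-order terms
inductive Term (F V : Type) : Type where
  | var : V → Term F V
  | app : F → List (Term F V) → Term F V

variable {F V : Type}

def Term.subst (σ : V → Term F V) : Term F V → Term F V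
  | .var x => σ x
  | .app f ts => .app f (ts.attach.map fun t => Term.subst σ t.1)
decreasing_by
  simp only [Term.app.sizeOf_spec]
  have := List.sizeOf_lt_of_mem t.2
  omega

def Term.rename (π : V → V) (t : Term F V) : Term F V :=
  t.subst (fun x => Term.var (π x))

inductive Ctx (F V : Type) : Type where
  | hole : Ctx F V
  | cons : F → List (Term F V) → Ctx F V → List (Term F V) → Ctx F V

def Ctx.fill : Ctx F V → Term F V → Term F V
  | .hole, t => t
  | .cons f l C r, t => Term.app f (l ++ C.fill t :: r)

abbrev TRS (F V : Type) := Set (Term F V × Term F V)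

def Step (R : TRS F V) (s t : Term F V) : Prop :=
  ∃ (C : Ctx F V) (σ : V → Term F V) (l r : Term F V),
    (l, r) ∈ R ∧ s = C.fill (l.subst σ) ∧ t = C.fill (r.subst σ)

inductive InVars (x : V) : Term F V → Prop where
  | var : InVars x (Term.var x)
  | app {f : F} {ts : List (Term F V)} {t : Term F V} :
      t ∈ ts → InVars x t → InVars x (Term.app f ts)

def WellFormedRule (l r : Term F V) : Prop :=
  (∀ x : V, l ≠ Term.var x) ∧ ∀ x, InVars x r → InVars x l

def IsTRS (R : TRS F V) : Prop := ∀ p ∈ R, WellFormedRule p.1 p.2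

inductive Ground : Term F V → Prop where
  | app {f : F} {ts : List (Term F V)} : (∀ t ∈ ts, Ground t) → Ground (Term.app f ts)

def GroundSys (R : TRS F V) : Prop := ∀ p ∈ R, Ground p.1 ∧ Ground p.2

def LeftReduced (R : TRS F V) : Prop := ∀ p ∈ R, NF (Step (R \ {p})) p.1
def RightReduced (R : TRS F V) : Prop := ∀ p ∈ R, NF (Step R) p.2
def Reduced (R : TRS F V) : Prop := LeftReduced R ∧ RightReduced R

def RuleVariant (p q : Term F V × Term F V) : Prop :=
  ∃ π : V → V, Function.Bijective π ∧ p.1 = q.1.rename π ∧ p.2 = q.2.rename π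

def LitSim (R S : TRS F V) : Prop :=
  (∀ p ∈ R, ∃ q ∈ S, RuleVariant p q) ∧ (∀ q ∈ S, ∃ p ∈ R, RuleVariant q p)

def Encompass (s t : Term F V) : Prop :=
  ∃ (C : Ctx F V) (σ : V → Term F V), s = C.fill (t.subst σ)

def PEncompass (s t : Term F V) : Prop := Encompass s t ∧ ¬ Encompass t s

def ReductionOrder (gt : Term F V → Term F V → Prop) : Prop :=
  Transitive gt ∧ WellFounded (fun a b => gt b a) ∧
  (∀ (C : Ctx F V) s t, gt s t → gt (C.fill s) (C.fill t)) ∧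
  (∀ (σ : V → Term F V) s t, gt s t → gt (s.subst σ) (t.subst σ))

-- positions
def subt : List ℕ → Term F V → Option (Term F V)
  | [], t => some t
  | _ :: _, Term.var _ => none
  | i :: p, Term.app _ ts => (ts[i]?).bind (subt p)

def repl : List ℕ → Term F V → Term F V → Option (Term F V)
  | [], _, u => some u
  | _ :: _, Term.var _, _ => none
  | i :: p, Term.app f ts, u =>
      (ts[i]?).bind fun w => (repl p w u).map fun w' => Term.app f (ts.set i w')

def FunPos (p : List ℕ) (t : Term F V) : Prop :=
  ∃ f ts, subt p t = some (Term.app f ts)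

def Unifier (σ : V → Term F V) (s t : Term F V) : Prop := s.subst σ = t.subst σ

def IsMGU (σ : V → Term F V) (s t : Term F V) : Prop :=
  Unifier σ s t ∧ ∀ τ, Unifier τ s t → ∃ ρ, ∀ x, (σ x).subst ρ = τ x

def VarsDisjoint (p q : Term F V × Term F V) : Prop :=
  ∀ x, ¬ ((InVars x p.1 ∨ InVars x p.2) ∧ (InVars x q.1 ∨ InVars x q.2))

def Overlap (R : TRS F V) (l1 r1 : Term F V) (p : List ℕ) (l2 r2 : Term F V) : Prop :=
  (∃ q ∈ R, RuleVariant (l1, r1) q) ∧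
  (∃ q ∈ R, RuleVariant (l2, r2) q) ∧
  VarsDisjoint (l1, r1) (l2, r2) ∧
  FunPos p l2 ∧
  (∃ w, subt p l2 = some w ∧ ∃ σ, Unifier σ l1 w) ∧
  (p = [] → ¬ RuleVariant (l1, r1) (l2, r2))

def CPeak (R : TRS F V) (t : Term F V) (p : List ℕ) (s u : Term F V) : Prop :=
  ∃ (l1 r1 l2 r2 : Term F V) (σ : V → Term F V) (w : Term F V),
    Overlap R l1 r1 p l2 r2 ∧ subt p l2 = some w ∧ IsMGU σ l1 w ∧
    s = l2.subst σ ∧ u = r2.subst σ ∧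
    repl p (l2.subst σ) (r1.subst σ) = some t

def PrimeCPeak (R : TRS F V) (t : Term F V) (p : List ℕ) (s u : Term F V) : Prop :=
  CPeak R t p s u ∧
  ∀ w v, subt p s = some w → (∃ q, q ≠ [] ∧ subt q w = some v) → NF (Step R) v

def PCP (R : TRS F V) : Set (Term F V × Term F V) :=
  { e | ∃ p s, PrimeCPeak R e.1 p s e.2 }

def Nabla (R : TRS F V) (s u w : Term F V) : Prop :=
  Relation.TransGen (Step R) s u ∧ Relation.TransGen (Step R) s w ∧
  (Joinable (Step R) u w ∨ SymmCl (Step (PCP R)) u w)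

-- counted conversions and rewrite sequences
inductive ConvN {α : Type _} (r : α → α → Prop) : ℕ → ℕ → α → α → Prop where
  | refl (a : α) : ConvN r 0 0 a a
  | fwd {l n : ℕ} {a b c : α} : r a b → ConvN r l n b c → ConvN r l (n + 1) a c
  | bwd {l n : ℕ} {a b c : α} : r b a → ConvN r l n b c → ConvN r (l + 1) n a c

inductive StepsN {α : Type _} (r : α → α → Prop) : ℕ → α → α → Prop where
  | refl (a : α) : StepsN r 0 a a
  | step {n : ℕ} {a b c : α} : r a b → StepsN r n b c → StepsN r (n + 1) a c

def RandomDescent {α : Type _} (r : α → α → Prop) : Prop :=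
  ∀ l m a b, ConvN r l m a b → NF r b → ∃ n, StepsN r n a b ∧ n + l = m


-- custom induction
theorem Term.my_ind {P : Term F V → Prop} (hv : ∀ x, P (.var x))
    (ha : ∀ f ts, (∀ t ∈ ts, P t) → P (.app f ts)) : ∀ t, P t
  | .var x => hv x
  | .app f ts => ha f ts (fun t ht => Term.my_ind hv ha t)
decreasing_by
  simp only [Term.app.sizeOf_spec]
  have := List.sizeOf_lt_of_mem ht
  omega

@[simp] theorem subst_var (σ : V → Term F V) (x : V) : (Term.var x).subst σ = σ x := by
  rw [Term.subst]

@[simp] theorem subst_app (σ : V → Term F V) (f : F) (ts : List (Term F V)) :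
    (Term.app f ts).subst σ = Term.app f (ts.map (Term.subst σ)) := by
  rw [Term.subst]; simp

def tsize : Term F V → ℕ
  | .var _ => 1
  | .app _ ts => 1 + (ts.attach.map fun t => tsize t.1).sum
decreasing_by
  simp only [Term.app.sizeOf_spec]
  have := List.sizeOf_lt_of_mem t.2
  omega

@[simp] theorem tsize_var (x : V) : tsize (Term.var x : Term F V) = 1 := by rw [tsize]

@[simp] theorem tsize_app (f : F) (ts : List (Term F V)) :
    tsize (Term.app f ts) = 1 + (ts.map tsize).sum := by
  rw [tsize]; simp

theorem tsize_pos (t : Term F V) : 1 ≤ tsize t := by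
  induction t using Term.my_ind with
  | hv x => simp
  | ha f ts ih => simp only [tsize_app]; omega

theorem tsize_subst_le (σ : V → Term F V) (t : Term F V) : tsize t ≤ tsize (t.subst σ) := by
  induction t using Term.my_ind with
  | hv x => simpa using tsize_pos (σ x)
  | ha f ts ih =>
      simp only [subst_app, tsize_app, List.map_map, add_le_add_iff_left]
      exact List.sum_le_sum (by simpa using ih)

theorem subst_id (t : Term F V) : t.subst Term.var = t := by
  induction t using Term.my_ind with
  | hv x => simp
  | ha f ts ih => simp only [subst_app]; rw [List.map_congr_left ih]; simp

theorem subst_subst (σ τ : V → Term F V) (t : Term F V) :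
    (t.subst σ).subst τ = t.subst (fun x => (σ x).subst τ) := by
  induction t using Term.my_ind with
  | hv x => simp
  | ha f ts ih =>
      simp only [subst_app, List.map_map]
      congr 1
      refine List.map_congr_left ?_
      intro t ht
      exact ih t ht

theorem subst_congr {σ τ : V → Term F V} {t : Term F V}
    (h : ∀ x, InVars x t → σ x = τ x) : t.subst σ = t.subst τ := by
  induction t using Term.my_ind with
  | hv x => simpa using h x .var
  | ha f ts ih =>
      simp only [subst_app]
      refine congrArg _ (List.map_congr_left ?_)
      intro u hu
      exact ih u hu (fun x hx => h x (.app hu hx))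

theorem subst_eq_self {σ : V → Term F V} {t : Term F V} (h : t.subst σ = t) :
    ∀ x, InVars x t → σ x = Term.var x := by
  induction t using Term.my_ind with
  | hv x => intro y hy; cases hy; simpa using h
  | ha f ts ih =>
      intro y hy
      cases hy with
      | app hu hyu =>
        rename_i u
        simp only [subst_app, Term.app.injEq] at h
        have hlen : (ts.map (Term.subst σ)).length = ts.length := by simp
        have : u.subst σ = u := by
          obtain ⟨i, hi, rfl⟩ := List.mem_iff_getElem.mp hu
          have h3 := congrArg (fun l : List (Term F V) => l[i]?) h.2
          simpa [List.getElem?_eq_getElem hi] using h3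
        exact ih u hu this y hyu

theorem invars_subst_of {σ : V → Term F V} {t : Term F V} {x y : V}
    (hx : InVars x t) (hy : InVars y (σ x)) : InVars y (t.subst σ) := by
  induction hx with
  | var => simpa using hy
  | app hu _ ih =>
      simp only [subst_app]
      exact .app (List.mem_map_of_mem hu) ih

theorem invars_subst {σ : V → Term F V} {t : Term F V} {y : V}
    (h : InVars y (t.subst σ)) : ∃ x, InVars x t ∧ InVars y (σ x) := by
  induction t using Term.my_ind with
  | hv x => exact ⟨x, .var, by simpa using h⟩
  | ha f ts ih =>
      simp only [subst_app] at h
      cases h with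
      | app hu hyu =>
        rename_i u
        obtain ⟨w, hw, rfl⟩ := List.mem_map.mp hu
        obtain ⟨x, hx1, hx2⟩ := ih w hw hyu
        exact ⟨x, .app hw hx1, hx2⟩
theorem tsize_fill_le (C : Ctx F V) (t : Term F V) : tsize t ≤ tsize (C.fill t) := by
  induction C with
  | hole => simp [Ctx.fill]
  | cons f l C r ih =>
      simp only [Ctx.fill, tsize_app, List.map_append, List.map_cons, List.sum_append,
        List.sum_cons]
      omega

theorem tsize_fill_lt {C : Ctx F V} (hC : C ≠ Ctx.hole) (t : Term F V) :
    tsize t < tsize (C.fill t) := by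
  cases C with
  | hole => exact absurd rfl hC
  | cons f l C r =>
      have := tsize_fill_le C t
      simp only [Ctx.fill, tsize_app, List.map_append, List.map_cons, List.sum_append,
        List.sum_cons]
      omega

def Ctx.csubst (σ : V → Term F V) : Ctx F V → Ctx F V
  | .hole => .hole
  | .cons f l C r => .cons f (l.map (Term.subst σ)) (C.csubst σ) (r.map (Term.subst σ))

theorem fill_subst (σ : V → Term F V) (C : Ctx F V) (t : Term F V) :
    (C.fill t).subst σ = (C.csubst σ).fill (t.subst σ) := by
  induction C with
  | hole => rfl
  | cons f l C r ih => simp [Ctx.fill, Ctx.csubst, ih]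

theorem step_subst {R : TRS F V} {a b : Term F V} (μ : V → Term F V) (h : Step R a b) :
    Step R (a.subst μ) (b.subst μ) := by
  obtain ⟨C, σ, l, r, hlr, ha, hb⟩ := h
  exact ⟨C.csubst μ, fun x => (σ x).subst μ, l, r, hlr,
    by rw [ha, fill_subst, subst_subst],
    by rw [hb, fill_subst, subst_subst]⟩

theorem rename_rename_of_inv {π ρ : V → V} (h : ∀ x, ρ (π x) = x) (t : Term F V) :
    (t.rename π).rename ρ = t := by
  unfold Term.rename
  rw [subst_subst]
  have : (fun x => (Term.var (π x) : Term F V).subst fun y => Term.var (ρ y)) = Term.var := by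
    funext x; simp [h]
  rw [this, subst_id]

theorem nf_rename {R : TRS F V} {u : Term F V} {π ρ : V → V} (h : ∀ x, ρ (π x) = x)
    (hnf : NF (Step R) u) : NF (Step R) (u.rename π) := by
  intro w hw
  have := step_subst (fun x => Term.var (ρ x)) hw
  rw [show (u.rename π).subst (fun x => Term.var (ρ x)) = (u.rename π).rename ρ from rfl,
    rename_rename_of_inv h] at this
  exact hnf _ this

def varList : Term F V → List V
  | .var x => [x]
  | .app _ ts => ts.attach.flatMap fun t => varList t.1
decreasing_by
  simp only [Term.app.sizeOf_spec]
  have := List.sizeOf_lt_of_mem t.2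
  omega

theorem invars_iff_mem_varList {x : V} {t : Term F V} : InVars x t ↔ x ∈ varList t := by
  induction t using Term.my_ind with
  | hv y =>
      rw [varList]
      constructor
      · rintro ⟨⟩; simp
      · intro h; simp at h; subst h; exact .var
  | ha f ts ih =>
      rw [varList]
      simp only [List.mem_flatMap, List.mem_attach, true_and, Subtype.exists]
      constructor
      · intro h
        cases h with
        | app hu hxu => exact ⟨_, hu, (ih _ hu).mp hxu⟩
      · rintro ⟨u, hu, hx⟩; exact .app hu ((ih u hu).mpr hx)

theorem exists_perm_extend {V : Type} {Sl Ss : Finset V} {h g : V → V}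
    (hm : ∀ y ∈ Sl, h y ∈ Ss) (hm' : ∀ x ∈ Ss, g x ∈ Sl)
    (hgh : ∀ y ∈ Sl, g (h y) = y) (hhg : ∀ x ∈ Ss, h (g x) = x) :
    ∃ π : V → V, Function.Bijective π ∧ ∀ y ∈ Sl, π y = h y := by
  classical
  have hcard : Sl.card = Ss.card :=
    Finset.card_bij (fun a _ => h a) hm
      (fun a₁ ha₁ a₂ ha₂ e => by
        rw [← hgh a₁ ha₁, ← hgh a₂ ha₂, e])
      (fun b hb => ⟨g b, hm' b hb, hhg b hb⟩)
  let j := Finset.equivOfCardEq (Finset.card_sdiff_comm hcard.symm)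
  let π : V → V := fun v => if hv : v ∈ Sl then h v else
    if hv2 : v ∈ Ss \ Sl then (j ⟨v, hv2⟩ : V) else v
  let ρ : V → V := fun v => if hv : v ∈ Ss then g v else
    if hv2 : v ∈ Sl \ Ss then (j.symm ⟨v, hv2⟩ : V) else v
  have hρπ : ∀ v, ρ (π v) = v := by
    intro v
    by_cases hv : v ∈ Sl
    · have hmem : h v ∈ Ss := hm v hv
      simp only [π, ρ, dif_pos hv, dif_pos hmem]
      exact hgh v hv
    · by_cases hv2 : v ∈ Ss \ Sl
      · have p : (j ⟨v, hv2⟩ : V) ∈ Sl \ Ss := (j ⟨v, hv2⟩).2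
        have h1 : (j ⟨v, hv2⟩ : V) ∉ Ss := (Finset.mem_sdiff.mp p).2
        simp only [π, ρ, dif_neg hv, dif_pos hv2, dif_neg h1, dif_pos p]
        rw [show (⟨(j ⟨v, hv2⟩ : V), p⟩ : {x // x ∈ Sl \ Ss}) = j ⟨v, hv2⟩ from rfl,
          Equiv.symm_apply_apply]
      · have hvs : v ∉ Ss := fun hh => hv2 (Finset.mem_sdiff.mpr ⟨hh, hv⟩)
        have hvd : v ∉ Sl \ Ss := fun hh => hv (Finset.mem_sdiff.mp hh).1
        simp only [π, ρ, dif_neg hv, dif_neg hv2, dif_neg hvs, dif_neg hvd]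
  have hπρ : ∀ v, π (ρ v) = v := by
    intro v
    by_cases hv : v ∈ Ss
    · have hmem : g v ∈ Sl := hm' v hv
      simp only [π, ρ, dif_pos hv, dif_pos hmem]
      exact hhg v hv
    · by_cases hv2 : v ∈ Sl \ Ss
      · have p : (j.symm ⟨v, hv2⟩ : V) ∈ Ss \ Sl := (j.symm ⟨v, hv2⟩).2
        have h1 : (j.symm ⟨v, hv2⟩ : V) ∉ Sl := (Finset.mem_sdiff.mp p).2
        simp only [π, ρ, dif_neg hv, dif_pos hv2, dif_neg h1, dif_pos p]
        rw [show (⟨(j.symm ⟨v, hv2⟩ : V), p⟩ : {x // x ∈ Ss \ Sl}) = j.symm ⟨v, hv2⟩ from rfl,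
          Equiv.apply_symm_apply]
      · have hvs : v ∉ Sl := fun hh => hv2 (Finset.mem_sdiff.mpr ⟨hh, hv⟩)
        have hvd : v ∉ Ss \ Sl := fun hh => hv (Finset.mem_sdiff.mp hh).1
        simp only [π, ρ, dif_neg hv, dif_neg hv2, dif_neg hvs, dif_neg hvd]
  exact ⟨π, Function.bijective_iff_has_inverse.mpr ⟨ρ, hρπ, hπρ⟩,
    fun y hy => dif_pos hy⟩

/-- For a right-reduced TRS, a reducible term minimal w.r.t. proper encompassment
rewrites in one or more steps only to variants of rules. -/
theorem right_reduced_minimal_step_rule {F V : Type} (R : TRS F V) (hTRS : IsTRS R)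
    (hRR : RightReduced R) (s t : Term F V)
    (hred : ¬ NF (Step R) s)
    (hmin : ∀ u, PEncompass s u → NF (Step R) u)
    (hst : Relation.TransGen (Step R) s t) :
    ∃ q ∈ R, RuleVariant (s, t) q := by
  classical
  obtain ⟨u, hsu, hut⟩ := Relation.TransGen.head'_iff.mp hst
  obtain ⟨C, σ, l, r, hlr, hsC, huC⟩ := hsu
  have hlred : ¬ NF (Step R) l := fun h =>
    h r ⟨Ctx.hole, Term.var, l, r, hlr, by simp [Ctx.fill, subst_id], by simp [Ctx.fill, subst_id]⟩
  have hEls : Encompass l s := by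
    by_contra hne
    exact hlred (hmin l ⟨⟨C, σ, hsC⟩, hne⟩)
  obtain ⟨D, τ, hlD⟩ := hEls
  have h1 : tsize (l.subst σ) ≤ tsize s := by rw [hsC]; exact tsize_fill_le C _
  have h2 : tsize l ≤ tsize (l.subst σ) := tsize_subst_le σ l
  have h3 : tsize (s.subst τ) ≤ tsize l := by rw [hlD]; exact tsize_fill_le D _
  have h4 : tsize s ≤ tsize (s.subst τ) := tsize_subst_le τ s
  have hC : C = Ctx.hole := by
    by_contra hne
    have := tsize_fill_lt hne (l.subst σ)
    rw [← hsC] at this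
    omega
  have hD : D = Ctx.hole := by
    by_contra hne
    have := tsize_fill_lt hne (s.subst τ)
    rw [← hlD] at this
    omega
  subst hC hD
  simp only [Ctx.fill] at hsC huC hlD
  -- hsC : s = l.subst σ, hlD : l = s.subst τ
  have key1 : ∀ y, InVars y l → (σ y).subst τ = Term.var y := by
    apply subst_eq_self
    rw [← subst_subst, ← hsC, ← hlD]
  have key2 : ∀ x, InVars x s → (τ x).subst σ = Term.var x := by
    apply subst_eq_self
    rw [← subst_subst, ← hlD, ← hsC]
  have hvarσ : ∀ y, InVars y l → ∃ w, σ y = Term.var w := by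
    intro y hy
    have hk := key1 y hy
    cases hσy : σ y with
    | var w => exact ⟨w, rfl⟩
    | app f ts => rw [hσy] at hk; simp at hk
  have hvarτ : ∀ x, InVars x s → ∃ w, τ x = Term.var w := by
    intro x hx
    have hk := key2 x hx
    cases hτx : τ x with
    | var w => exact ⟨w, rfl⟩
    | app f ts => rw [hτx] at hk; simp at hk
  let h : V → V := fun y => if hy : ∃ w, σ y = Term.var w then hy.choose else y
  let g : V → V := fun x => if hx : ∃ w, τ x = Term.var w then hx.choose else x
  have hσh : ∀ y, InVars y l → σ y = Term.var (h y) := by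
    intro y hy
    have e := hvarσ y hy
    simp only [h, dif_pos e]
    exact e.choose_spec
  have hτg : ∀ x, InVars x s → τ x = Term.var (g x) := by
    intro x hx
    have e := hvarτ x hx
    simp only [g, dif_pos e]
    exact e.choose_spec
  have hmemh : ∀ y, InVars y l → InVars (h y) s := by
    intro y hy
    rw [hsC]
    exact invars_subst_of hy (by rw [hσh y hy]; exact .var)
  have hmemg : ∀ x, InVars x s → InVars (g x) l := by
    intro x hx
    rw [hlD]
    exact invars_subst_of hx (by rw [hτg x hx]; exact .var)
  have hgh : ∀ y, InVars y l → g (h y) = y := by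
    intro y hy
    have hk := key1 y hy
    rw [hσh y hy] at hk
    simp only [subst_var] at hk
    rw [hτg _ (hmemh y hy)] at hk
    exact (Term.var.inj hk)
  have hhg : ∀ x, InVars x s → h (g x) = x := by
    intro x hx
    have hk := key2 x hx
    rw [hτg x hx] at hk
    simp only [subst_var] at hk
    rw [hσh _ (hmemg x hx)] at hk
    exact (Term.var.inj hk)
  -- finsets of variables
  let Sl : Finset V := (varList l).toFinset
  let Ss : Finset V := (varList s).toFinset
  have hSl : ∀ y, y ∈ Sl ↔ InVars y l := by
    intro y; simp only [Sl, List.mem_toFinset]; exact invars_iff_mem_varList.symm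
  have hSs : ∀ x, x ∈ Ss ↔ InVars x s := by
    intro x; simp only [Ss, List.mem_toFinset]; exact invars_iff_mem_varList.symm
  obtain ⟨π, hπbij, hπh⟩ := exists_perm_extend (Sl := Sl) (Ss := Ss) (h := h) (g := g)
    (fun y hy => (hSs _).mpr (hmemh y ((hSl y).mp hy)))
    (fun x hx => (hSl _).mpr (hmemg x ((hSs x).mp hx)))
    (fun y hy => hgh y ((hSl y).mp hy))
    (fun x hx => hhg x ((hSs x).mp hx))
  have hπσ : ∀ y, InVars y l → σ y = Term.var (π y) := by
    intro y hy
    rw [hπh y ((hSl y).mpr hy)]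
    exact hσh y hy
  have hsrename : s = l.rename π := by
    rw [hsC]
    exact (subst_congr (fun y hy => (hπσ y hy).symm)).symm ▸ rfl
  have hvars_r : ∀ x, InVars x r → InVars x l := (hTRS (l, r) hlr).2
  have hurename : u = r.rename π := by
    rw [huC]
    exact subst_congr (fun y hy => hπσ y (hvars_r y hy))
  obtain ⟨ρ, hρπ, hπρ⟩ := Function.bijective_iff_has_inverse.mp hπbij
  have hnfu : NF (Step R) u := by
    rw [hurename]
    exact nf_rename hρπ (hRR (l, r) hlr)
  have htu : t = u := by
    rcases Relation.ReflTransGen.cases_head hut with hh | ⟨c, hc, _⟩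
    · exact hh.symm
    · exact absurd hc (hnfu c)
  exact ⟨(l, r), hlr, π, hπbij, hsrename, by rw [htu, hurename]⟩


end KB
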